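/- Let c > 0 be real and k ≥ 2 an integer. Then the contour integral ∫_{c-i∞}^{c+i∞} y^s / s^k ds equals 0 if 0 ≤ y < 1, and equals (2πi/(k-1)!)·(log y)^{k-1} if y ≥ 1. -/

import Mathlib

open Complex

section PerronAux
open MeasureTheory Set Filter Real Asymptotics


noncomputable def perronAux (n : ℕ) : ℝ → ℂ :=
  Set.indicator (Set.Ioc 0 1) (fun t => ((Real.log t : ℂ)) ^ n)

lemma perronAux_succ (n : ℕ) :
    perronAux (n + 1) = fun t => Real.log t • perronAux n t := by
  funext t
  simp only [perronAux, Set.indicator]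
  by_cases h : t ∈ Set.Ioc (0:ℝ) 1 <;> simp [h, pow_succ, real_smul]; ring

lemma perronAux_meas (n : ℕ) : AEStronglyMeasurable (perronAux n) volume :=
  (((Complex.measurable_ofReal.comp Real.measurable_log).pow_const n).indicator
    measurableSet_Ioc).aestronglyMeasurable

lemma perronAux_norm_le (n : ℕ) (t : ℝ) : ‖perronAux n t‖ ≤ |Real.log t| ^ n := by
  simp only [perronAux, Set.indicator]
  by_cases h : t ∈ Set.Ioc (0:ℝ) 1
  · simp [h, norm_pow, Complex.norm_real]
  · simp only [h, if_false, norm_zero]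
    positivity

lemma perronAux_locInt (n : ℕ) : LocallyIntegrableOn (perronAux n) (Set.Ioi 0) := by
  intro x hx
  simp only [Set.mem_Ioi] at hx
  refine ⟨Set.Icc (x/2) (x+1), ?_, ?_⟩
  · exact mem_nhdsWithin_of_mem_nhds (Icc_mem_nhds (by linarith) (by linarith))
  · have hM : ∀ t ∈ Set.Icc (x/2) (x+1), ‖perronAux n t‖ ≤
        (max |Real.log (x/2)| |Real.log (x+1)|) ^ n := by
      intro t ht
      refine (perronAux_norm_le n t).trans (pow_le_pow_left₀ (abs_nonneg _) ?_ n)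
      rcases ht with ⟨h1, h2⟩
      have h0 : 0 < x/2 := by linarith
      rw [abs_le]
      refine ⟨le_trans (le_trans (neg_le_neg (le_max_left _ _)) (neg_abs_le _))
        (Real.log_le_log h0 h1), le_trans (Real.log_le_log (by linarith) h2)
          (le_trans (le_abs_self _) (le_max_right _ _))⟩
    exact Measure.integrableOn_of_bounded (measure_Icc_lt_top.ne)
      (perronAux_meas n) ((ae_restrict_iff' measurableSet_Icc).mpr (ae_of_all _ hM))


lemma perronAux_top (n : ℕ) (a : ℝ) :
    perronAux n =O[atTop] (fun t : ℝ => t ^ (-a)) := by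
  have h : perronAux n =ᶠ[atTop] (fun _ => (0:ℂ)) := by
    filter_upwards [eventually_gt_atTop (1:ℝ)] with t ht
    simp [perronAux, Set.indicator, Set.mem_Ioc, not_le.mpr ht]
  exact (isBigO_zero _ _).congr' h.symm EventuallyEq.rfl

lemma perronAux_bot (n : ℕ) : ∀ b : ℝ, 0 < b →
    perronAux n =O[nhdsWithin 0 (Set.Ioi 0)] (fun t : ℝ => t ^ (-b)) := by
  induction n with
  | zero =>
    intro b hb
    rw [isBigO_iff]
    refine ⟨1, ?_⟩
    filter_upwards [self_mem_nhdsWithin] with t ht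
    simp only [Set.mem_Ioi] at ht
    rcases le_or_gt t 1 with h1 | h1
    · have : (1:ℝ) ≤ t ^ (-b) :=
        Real.one_le_rpow_of_pos_of_le_one_of_nonpos ht h1 (by linarith)
      calc ‖perronAux 0 t‖ ≤ 1 := by
            simp [perronAux, Set.indicator]; split <;> simp
        _ ≤ 1 * ‖t ^ (-b)‖ := by
            rw [one_mul, Real.norm_eq_abs, abs_of_pos (Real.rpow_pos_of_pos ht _)]; exact this
    · have h0 : perronAux 0 t = 0 := by
        simp [perronAux, Set.indicator, Set.mem_Ioc, not_le.mpr h1]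
      rw [h0]; simp
  | succ n ih =>
    intro b hb
    have := isBigO_rpow_zero_log_smul (by linarith : b/2 < b) (ih (b/2) (by linarith))
    refine this.congr' ?_ EventuallyEq.rfl
    refine Eventually.of_forall fun t => ?_
    simp only [perronAux, Set.indicator]
    by_cases h : t ∈ Set.Ioc (0:ℝ) 1 <;> simp [h, pow_succ, real_smul] ; ring


lemma perronAux_contAt (n : ℕ) (hn : 1 ≤ n) {x : ℝ} (hx : 0 < x) :
    ContinuousAt (perronAux n) x := by
  rcases lt_trichotomy x 1 with h | h | h
  · have hev : (fun t : ℝ => ((Real.log t : ℂ)) ^ n) =ᶠ[nhds x] perronAux n := by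
      filter_upwards [Ioo_mem_nhds hx h] with t ht
      simp [perronAux, Set.indicator, Set.mem_Ioc, ht.1, ht.2.le]
    refine ContinuousAt.congr ?_ hev
    exact ((Complex.continuous_ofReal.continuousAt).comp
      (Real.continuousAt_log hx.ne')).pow n
  · subst h
    have hf1 : perronAux n 1 = 0 := by
      simp [perronAux, Set.indicator, Set.mem_Ioc, zero_pow (by omega : n ≠ 0)]
    rw [ContinuousAt, hf1]
    have hb : Tendsto (fun t : ℝ => |Real.log t| ^ n) (nhds 1) (nhds 0) := by
      have : ContinuousAt (fun t : ℝ => |Real.log t| ^ n) 1 :=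
        ((Real.continuousAt_log one_ne_zero).abs.pow n)
      have h0 : |Real.log 1| ^ n = 0 := by
        simp [Real.log_one, zero_pow (by omega : n ≠ 0)]
      rw [ContinuousAt] at this
      rwa [show |Real.log 1| ^ n = 0 from h0] at this
    exact squeeze_zero_norm (perronAux_norm_le n) hb
  · have hev : (fun _ : ℝ => (0:ℂ)) =ᶠ[nhds x] perronAux n := by
      filter_upwards [Ioi_mem_nhds h] with t ht
      simp [perronAux, Set.indicator, Set.mem_Ioc, not_le.mpr (show (1:ℝ) < t from ht)]
    exact ContinuousAt.congr continuousAt_const hev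


lemma perronAux_hasMellin (n : ℕ) : ∀ s : ℂ, 0 < s.re →
    MellinConvergent (perronAux n) s ∧
      mellin (perronAux n) s = (-1) ^ n * n.factorial / s ^ (n + 1) := by
  induction n with
  | zero =>
    intro s hs
    have h := hasMellin_one_Ioc hs
    have he : perronAux 0 = Set.indicator (Set.Ioc 0 1) (fun _ => (1:ℂ)) := by
      funext t; simp [perronAux]
    rw [HasMellin] at h
    rw [he]
    refine ⟨h.1, ?_⟩
    rw [h.2]; simp
  | succ n ih =>
    intro s hs
    have hd := mellin_hasDerivAt_of_isBigO_rpow (E := ℂ) (a := s.re + 1) (b := s.re / 2)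
      (perronAux_locInt n) (perronAux_top n (s.re + 1)) (by linarith)
      (perronAux_bot n (s.re / 2) (by linarith)) (by linarith)
    obtain ⟨hconv, hderiv⟩ := hd
    have hs0 : s ≠ 0 := fun h => by simp [h] at hs
    -- the closed-form function and its derivative
    have h1 : HasDerivAt (fun z : ℂ => z ^ (n + 1)) ((n + 1 : ℕ) * s ^ n) s := by
      simpa using hasDerivAt_pow (n + 1) s
    have h2 := (h1.inv (pow_ne_zero _ hs0)).const_mul ((-1 : ℂ) ^ n * n.factorial)
    have hval : (-1 : ℂ) ^ n * n.factorial * (-((n + 1 : ℕ) * s ^ n) / (s ^ (n + 1)) ^ 2)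
        = (-1) ^ (n + 1) * (n + 1).factorial / s ^ (n + 1 + 1) := by
      rw [Nat.factorial_succ]
      push_cast
      field_simp
      ring
    have hH : HasDerivAt (fun z : ℂ => (-1) ^ n * n.factorial / z ^ (n + 1))
        ((-1) ^ (n + 1) * (n + 1).factorial / s ^ (n + 1 + 1)) s := by
      rw [← hval]
      simpa [div_eq_mul_inv] using h2
    have hev : (mellin (perronAux n)) =ᶠ[nhds s]
        (fun z : ℂ => (-1) ^ n * n.factorial / z ^ (n + 1)) := by
      filter_upwards [(isOpen_lt continuous_const Complex.continuous_re).mem_nhds hs] with z hz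
      exact (ih z hz).2
    have hderiv2 := hH.congr_of_eventuallyEq hev
    have huniq := hderiv.unique hderiv2
    constructor
    · rw [perronAux_succ]; exact hconv
    · rw [perronAux_succ]; exact huniq


lemma perron_ne_zero (c : ℝ) (hc : 0 < c) (t : ℝ) : ((c:ℂ) + t * I) ≠ 0 := by
  intro h
  have := congrArg Complex.re h
  simp at this
  exact hc.ne' this

lemma perron_integrable_inv_pow (c : ℝ) (hc : 0 < c) (k : ℕ) (hk : 2 ≤ k) :
    Integrable fun t : ℝ => (((c:ℂ) + t * I) ^ k)⁻¹ := by
  have hcont : Continuous fun t : ℝ => (((c:ℂ) + t * I) ^ k)⁻¹ := by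
    refine Continuous.inv₀ ?_ fun t => pow_ne_zero _ (perron_ne_zero c hc t)
    exact (continuous_const.add (Complex.continuous_ofReal.mul continuous_const)).pow k
  set C : ℝ := (c ^ (k - 2) * min (c ^ 2) 1)⁻¹ with hC
  refine (integrable_inv_one_add_sq.const_mul C).mono' hcont.aestronglyMeasurable
    (ae_of_all _ fun t => ?_)
  have habs2 : ‖(c:ℂ) + t * I‖ ^ 2 = c ^ 2 + t ^ 2 := by
    rw [Complex.sq_norm, Complex.normSq_add_mul_I]
  have habsge : c ≤ ‖(c:ℂ) + t * I‖ := by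
    have h := Complex.abs_re_le_norm ((c:ℂ) + t * I)
    have hre : ((c:ℂ) + t * I).re = c := by simp
    rwa [hre, abs_of_pos hc] at h
  have hpow : (c ^ 2 + t ^ 2) * c ^ (k - 2) ≤ ‖(c:ℂ) + t * I‖ ^ k := by
    have : ‖(c:ℂ) + t * I‖ ^ k
        = ‖(c:ℂ) + t * I‖ ^ 2 * ‖(c:ℂ) + t * I‖ ^ (k - 2) := by
      rw [← pow_add]
      congr 1
      omega
    rw [this, habs2]
    exact mul_le_mul_of_nonneg_left (pow_le_pow_left₀ hc.le habsge _) (by positivity)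
  have hmin : min (c ^ 2) 1 * (1 + t ^ 2) ≤ c ^ 2 + t ^ 2 := by
    rcases le_total (c ^ 2) 1 with h | h
    · rw [min_eq_left h]; nlinarith [sq_nonneg t]
    · rw [min_eq_right h]; nlinarith
  have hmpos : 0 < min (c ^ 2) 1 := lt_min (by positivity) one_pos
  calc ‖(((c:ℂ) + t * I) ^ k)⁻¹‖ = (‖(c:ℂ) + t * I‖ ^ k)⁻¹ := by
        rw [norm_inv, norm_pow]
    _ ≤ (min (c ^ 2) 1 * (1 + t ^ 2) * c ^ (k - 2))⁻¹ := by
        apply inv_anti₀ (by positivity)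
        calc min (c ^ 2) 1 * (1 + t ^ 2) * c ^ (k - 2)
            ≤ (c ^ 2 + t ^ 2) * c ^ (k - 2) :=
              mul_le_mul_of_nonneg_right hmin (by positivity)
          _ ≤ _ := hpow
    _ = C * (1 + t ^ 2)⁻¹ := by rw [hC]; field_simp


theorem vertical_line_integral_ys_div_sk (c : ℝ) (hc : 0 < c) (k : ℕ) (hk : 2 ≤ k)
    (y : ℝ) (hy : 0 ≤ y) :
    Filter.Tendsto
      (fun T : ℝ => Complex.I * ∫ t in (-T)..T,
        (y : ℂ) ^ ((c : ℂ) + (t : ℂ) * Complex.I) / ((c : ℂ) + (t : ℂ) * Complex.I) ^ k)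
      Filter.atTop
      (nhds (if y < 1 then 0
        else 2 * Real.pi * Complex.I / (Nat.factorial (k - 1)) * (Real.log y) ^ (k - 1))) := by
  rcases eq_or_lt_of_le hy with hy0 | hy0
  · -- y = 0
    rw [if_pos (by rw [← hy0]; norm_num)]
    have hzero : ∀ T : ℝ, (Complex.I * ∫ t in (-T)..T,
        (y : ℂ) ^ ((c : ℂ) + (t : ℂ) * I) / ((c : ℂ) + (t : ℂ) * I) ^ k) = 0 := by
      intro T
      have : ∀ t : ℝ, (y : ℂ) ^ ((c : ℂ) + (t : ℂ) * I) / ((c : ℂ) + (t : ℂ) * I) ^ k = 0 := by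
        intro t
        rw [← hy0]
        push_cast
        rw [zero_cpow (perron_ne_zero c hc t), zero_div]
      simp only [this, intervalIntegral.integral_zero, mul_zero]
    simp only [hzero]
    exact tendsto_const_nhds
  · -- y > 0
    set m := k - 1 with hm
    have hm1 : 1 ≤ m := by omega
    have hmk : m + 1 = k := by omega
    set A : ℂ := (-1) ^ m * m.factorial with hA
    have hA0 : A ≠ 0 := by
      rw [hA]
      exact mul_ne_zero (pow_ne_zero _ (by norm_num)) (Nat.cast_ne_zero.mpr m.factorial_ne_zero)
    have hre : ∀ t : ℝ, ((c:ℂ) + (t:ℂ) * I).re = c := fun t => by simp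
    have hmel : ∀ t : ℝ, mellin (perronAux m) ((c:ℂ) + (t:ℂ) * I) = A / ((c:ℂ) + (t:ℂ) * I) ^ k := by
      intro t
      have h := (perronAux_hasMellin m ((c:ℂ) + (t:ℂ) * I) (by rw [hre]; exact hc)).2
      rwa [hmk] at h
    have hconv : MellinConvergent (perronAux m) ((c:ℝ):ℂ) :=
      (perronAux_hasMellin m _ (by simp [hc])).1
    have hVert : Complex.VerticalIntegrable (mellin (perronAux m)) c := by
      refine (((perron_integrable_inv_pow c hc k hk).const_mul A).congr
        (ae_of_all _ fun t => ?_))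
      show A * (((c:ℂ) + (t:ℂ) * I) ^ k)⁻¹ = mellin (perronAux m) ((c:ℂ) + (t:ℂ) * I)
      rw [hmel t, div_eq_mul_inv]
    have hx : (0:ℝ) < y⁻¹ := by positivity
    have hcont : ContinuousAt (perronAux m) y⁻¹ := perronAux_contAt m hm1 hx
    have hinv := mellinInv_mellin_eq c (perronAux m) hx hconv hVert hcont
    -- the integrand and its integrability
    set F : ℝ → ℂ := fun t => (y : ℂ) ^ ((c : ℂ) + (t : ℂ) * I) / ((c : ℂ) + (t : ℂ) * I) ^ k
      with hF
    have hFint : Integrable F := by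
      have hmeas : Continuous fun t : ℝ => (y : ℂ) ^ ((c : ℂ) + (t : ℂ) * I) := by
        refine Continuous.const_cpow ?_ (Or.inl (ofReal_ne_zero.mpr hy0.ne'))
        exact continuous_const.add (Complex.continuous_ofReal.mul continuous_const)
      have := (perron_integrable_inv_pow c hc k hk).bdd_mul hmeas.aestronglyMeasurable
        (c := y ^ c) (ae_of_all _ fun t => by
          rw [Complex.norm_cpow_eq_rpow_re_of_pos hy0, hre])
      refine this.congr (ae_of_all _ fun t => ?_)
      show _ = (y : ℂ) ^ ((c : ℂ) + (t : ℂ) * I) / ((c : ℂ) + (t : ℂ) * I) ^ k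
      rw [div_eq_mul_inv]
    have htend : Tendsto (fun T : ℝ => ∫ t in (-T)..T, F t) atTop (nhds (∫ t : ℝ, F t)) :=
      intervalIntegral_tendsto_integral hFint tendsto_neg_atTop_atBot tendsto_id
    have hgoal : Tendsto (fun T : ℝ => Complex.I * ∫ t in (-T)..T, F t) atTop
        (nhds (Complex.I * ∫ t : ℝ, F t)) := htend.const_mul I
    -- compute the integral from the inversion formula
    have hcpow : ∀ t : ℝ, ((y⁻¹ : ℝ) : ℂ) ^ (-((c:ℂ) + (t:ℂ) * I)) = (y : ℂ) ^ ((c:ℂ) + (t:ℂ) * I) := by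
      intro t
      rw [ofReal_inv, inv_cpow _ _ (by
        rw [Complex.arg_ofReal_of_nonneg hy]
        exact Real.pi_ne_zero.symm), cpow_neg, inv_inv]
    have hInt : (∫ t : ℝ, ((y⁻¹ : ℝ) : ℂ) ^ (-(((c:ℝ):ℂ) + (t:ℂ) * I)) •
        mellin (perronAux m) (((c:ℝ):ℂ) + (t:ℂ) * I)) = A * ∫ t : ℝ, F t := by
      rw [← integral_const_mul]
      congr 1
      funext t
      rw [smul_eq_mul, hcpow t, hmel t, hF]
      ring
    rw [mellinInv, hInt] at hinv
    have hL : (∫ t : ℝ, F t) = 2 * (π:ℂ) * A⁻¹ * perronAux m y⁻¹ := by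
      have h2π : ((2 * π : ℝ) : ℂ) ≠ 0 := by
        push_cast
        exact mul_ne_zero two_ne_zero (ofReal_ne_zero.mpr Real.pi_ne_zero)
      rw [real_smul] at hinv
      push_cast at hinv ⊢
      field_simp at hinv ⊢
      linear_combination hinv
    rcases lt_or_ge y 1 with hy1 | hy1
    · rw [if_pos hy1]
      have hg0 : perronAux m y⁻¹ = 0 := by
        have : (1:ℝ) < y⁻¹ := (one_lt_inv_iff₀).mpr ⟨hy0, hy1⟩
        simp [perronAux, Set.indicator, Set.mem_Ioc, not_le.mpr this]
      rw [hg0, mul_zero] at hL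
      rw [show (0:ℂ) = Complex.I * ∫ t : ℝ, F t by rw [hL, mul_zero]]
      exact hgoal
    · rw [if_neg (not_lt.mpr hy1)]
      have hgv : perronAux m y⁻¹ = (-1)^m * ((Real.log y : ℂ)) ^ m := by
        have hmem : y⁻¹ ∈ Set.Ioc (0:ℝ) 1 := ⟨hx, inv_le_one_of_one_le₀ hy1⟩
        simp only [perronAux, Set.indicator_of_mem hmem]
        rw [Real.log_inv]
        push_cast
        rw [neg_pow]
      have honep : ((-1:ℂ)) ^ m * (-1) ^ m = 1 := by
        rw [← pow_add]
        exact Even.neg_one_pow ⟨m, rfl⟩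
      have h1 : (((-1:ℂ)) ^ m * (m.factorial : ℂ))⁻¹ * ((-1) ^ m * ((Real.log y : ℂ)) ^ m)
          = ((m.factorial : ℂ))⁻¹ * ((Real.log y : ℂ)) ^ m := by
        rw [mul_inv]
        have hinv1 : (((-1:ℂ)) ^ m)⁻¹ = (-1) ^ m := by
          rw [← inv_pow, inv_neg, inv_one]
        rw [hinv1]
        linear_combination (((m.factorial : ℂ))⁻¹ * ((Real.log y : ℂ)) ^ m) * honep
      have : Complex.I * ∫ t : ℝ, F t =
          2 * π * Complex.I / (m.factorial : ℂ) * ((Real.log y : ℝ) : ℂ) ^ m := by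
        rw [hL, hgv, hA, mul_assoc (2 * (π:ℂ)), h1, div_eq_mul_inv]
        ring
      rw [← this]
      exact hgoal

end PerronAux
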